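/- Let m be an odd positive integer with m ≢ 1 (mod 3), m(m+1) not divisible by the square of any odd prime, and m+1 not a multiple of 8. Set d = (2m+1)² − 2. Suppose D = X ∪ (−X) ⊆ S^{d-1}(2m+1) is a tight spherical 5-design (so ⟨x,y⟩ = ±1 for distinct x,y ∈ X). Assume further: (a) ⟨λ,λ⟩ ≡ 0 (mod 4) for all λ ∈ Λ₊ (where Λ₊ is the even-coefficient-sum sublattice of the lattice Λ generated by X), and (b) with Γ = (1/√2)Λ₊, one has Γ*/Γ ≅ ℤ/2ℤ. Then there is no α in the dual lattice Λ* with ⟨α,x⟩ ∈ {0,±1} for all x ∈ X; i.e., D is not of minimal type. -/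

import Mathlib

open scoped RealInnerProductSpace

/-- The dual lattice (as an additive subgroup) of an additive subgroup of Euclidean
space: all vectors whose inner products with elements of `Γ` are integers. -/
noncomputable def dualSubgroup {d : ℕ} (Γ : AddSubgroup (EuclideanSpace ℝ (Fin d))) :
    AddSubgroup (EuclideanSpace ℝ (Fin d)) where
  carrier := {v | ∀ γ ∈ Γ, ∃ z : ℤ, ⟪v, γ⟫ = (z : ℝ)}
  zero_mem' := fun γ _ => ⟨0, by simp⟩
  add_mem' := by
    intro a b ha hb γ hγ
    obtain ⟨z1, hz1⟩ := ha γ hγ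
    obtain ⟨z2, hz2⟩ := hb γ hγ
    refine ⟨z1 + z2, ?_⟩
    rw [inner_add_left, hz1, hz2]
    push_cast
    ring
  neg_mem' := by
    intro a ha γ hγ
    obtain ⟨z, hz⟩ := ha γ hγ
    refine ⟨-z, ?_⟩
    rw [inner_neg_left, hz]
    push_cast
    ring

/-- The sublattice `Λ₊` of the lattice generated by `X`: integer combinations of the
elements of `X` whose coefficient sum is even. -/
noncomputable def evenSumSpan {d : ℕ} (X : Finset (EuclideanSpace ℝ (Fin d))) :
    AddSubgroup (EuclideanSpace ℝ (Fin d)) where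
  carrier := {v | ∃ c : {x // x ∈ X} → ℤ, Even (∑ x, c x) ∧
      v = ∑ x : {x // x ∈ X}, (c x : ℝ) • (x : EuclideanSpace ℝ (Fin d))}
  zero_mem' := ⟨0, by simp, by simp⟩
  add_mem' := by
    rintro a b ⟨c₁, hc₁, rfl⟩ ⟨c₂, hc₂, rfl⟩
    refine ⟨c₁ + c₂, ?_, ?_⟩
    · simpa [Finset.sum_add_distrib] using hc₁.add hc₂
    · rw [← Finset.sum_add_distrib]
      refine Finset.sum_congr rfl fun x _ => ?_
      simp [add_smul]
  neg_mem' := by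
    rintro a ⟨c, hc, rfl⟩
    refine ⟨-c, ?_, ?_⟩
    · simpa using hc.neg
    · rw [← Finset.sum_neg_distrib]
      refine Finset.sum_congr rfl fun x _ => ?_
      simp [neg_smul]

lemma card_two_nonzero_eq {G : Type*} [AddGroup G] (h : Nat.card G = 2)
    {a b : G} (ha : a ≠ 0) (hb : b ≠ 0) : a = b := by
  have hf : Finite G := Nat.finite_of_card_ne_zero (by omega)
  by_contra hne
  have h1 : ({0, a, b} : Set G).ncard ≤ Nat.card G := by
    rw [← Set.ncard_univ]
    exact Set.ncard_le_ncard (Set.subset_univ _) Set.finite_univ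
  have h2 : ({0, a, b} : Set G).ncard = 3 := by
    rw [Set.ncard_insert_of_notMem (by simp [Ne, eq_comm, ha, hb]),
      Set.ncard_pair hne]
  omega

theorem stmt14 (m : ℕ) (hm0 : 0 < m) (hodd : Odd m) (hm3 : m % 3 ≠ 1)
    (hsq : ∀ p : ℕ, p.Prime → Odd p → ¬ (p ^ 2 ∣ m * (m + 1)))
    (h8 : ¬ (8 ∣ (m + 1)))
    (d : ℕ) (hd : d = (2 * m + 1) ^ 2 - 2)
    [DecidableEq (EuclideanSpace ℝ (Fin d))]
    (X D : Finset (EuclideanSpace ℝ (Fin d))) (hX : X.Nonempty)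
    (hD : D = X ∪ X.image fun v => -v)
    (hnorm : ∀ x ∈ X, ⟪x, x⟫ = 2 * (m : ℝ) + 1)
    (hang : ∀ x ∈ X, ∀ y ∈ X, x ≠ y → ⟪x, y⟫ = 1 ∨ ⟪x, y⟫ = -1)
    (h2mom : ∀ y : EuclideanSpace ℝ (Fin d),
      ∑ x ∈ D, ⟪y, x⟫ ^ 2 = ((2 * (m : ℝ) + 1) / d) * D.card * ⟪y, y⟫)
    (h4mom : ∀ y : EuclideanSpace ℝ (Fin d),
      ∑ x ∈ D, ⟪y, x⟫ ^ 4
        = (3 * (2 * (m : ℝ) + 1) ^ 2 / (d * (d + 2))) * D.card * ⟪y, y⟫ ^ 2)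
    (ha : ∀ v ∈ evenSumSpan X, ∃ z : ℤ, ⟪v, v⟫ = 4 * (z : ℝ))
    (Γ : AddSubgroup (EuclideanSpace ℝ (Fin d)))
    (hΓ : Γ = (evenSumSpan X).comap
      (DistribMulAction.toAddMonoidHom (EuclideanSpace ℝ (Fin d)) (Real.sqrt 2)))
    (hb : Nat.card (↥(dualSubgroup Γ) ⧸ Γ.addSubgroupOf (dualSubgroup Γ)) = 2) :
    ¬ ∃ α ∈ dualSubgroup (AddSubgroup.closure (X : Set (EuclideanSpace ℝ (Fin d)))),
        α ≠ 0 ∧ ∀ x ∈ X, ⟪α, x⟫ = 0 ∨ ⟪α, x⟫ = 1 ∨ ⟪α, x⟫ = -1 := by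
  rintro ⟨α, hαdual, hα0, hαX⟩
  obtain ⟨x₀, hx₀⟩ := hX
  classical
  have hs2 : Real.sqrt 2 * Real.sqrt 2 = 2 := Real.mul_self_sqrt (by norm_num)
  have hΓmem : ∀ v : EuclideanSpace ℝ (Fin d),
      v ∈ Γ ↔ Real.sqrt 2 • v ∈ evenSumSpan X := by
    intro v; rw [hΓ, AddSubgroup.mem_comap]; rfl
  -- parity lemma : inner products of Λ₊ with elements of X are even integers
  have hpar : ∀ v ∈ evenSumSpan X, ∀ x ∈ X, ∃ n : ℤ, ⟪v, x⟫ = 2 * (n : ℝ) := by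
    rintro v ⟨c, hc, rfl⟩ x hx
    set e : {y // y ∈ X} → ℤ := fun y =>
      if (y : EuclideanSpace ℝ (Fin d)) = x then 2 * m + 1
      else if ⟪(y : EuclideanSpace ℝ (Fin d)), x⟫ = 1 then 1 else -1 with he_def
    have he : ∀ y : {y // y ∈ X}, ⟪(y : EuclideanSpace ℝ (Fin d)), x⟫ = (e y : ℝ) := by
      intro y
      by_cases hyx : (y : EuclideanSpace ℝ (Fin d)) = x
      · rw [hyx, hnorm x hx, he_def]
        dsimp only
        rw [if_pos hyx]
        push_cast; ring
      · rw [he_def]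
        dsimp only
        rw [if_neg hyx]
        rcases hang y y.2 x hx hyx with h | h
        · rw [if_pos h, h]; norm_num
        · rw [if_neg (by rw [h]; norm_num), h]; norm_num
    have hsum : ⟪(∑ y : {y // y ∈ X}, (c y : ℝ) • (y : EuclideanSpace ℝ (Fin d))), x⟫
        = ((∑ y : {y // y ∈ X}, c y * e y : ℤ) : ℝ) := by
      rw [sum_inner]
      push_cast
      refine Finset.sum_congr rfl fun y _ => ?_
      rw [real_inner_smul_left, he]
    have hodd' : ∀ y : {y // y ∈ X}, Odd (e y) := by
      intro y
      rw [he_def]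
      dsimp only
      split
      · exact ⟨m, by ring⟩
      · split
        · exact odd_one
        · exact ⟨-1, by ring⟩
    have hev : Even (∑ y : {y // y ∈ X}, c y * e y) := by
      have hsplit : (∑ y : {y // y ∈ X}, c y * e y)
          = (∑ y : {y // y ∈ X}, c y) + ∑ y : {y // y ∈ X}, c y * (e y - 1) := by
        rw [← Finset.sum_add_distrib]
        exact Finset.sum_congr rfl fun y _ => by ring
      rw [hsplit]
      refine hc.add (Finset.even_sum _ fun y _ => ?_)
      exact ((hodd' y).sub_odd odd_one).mul_left _
    obtain ⟨r, hr⟩ := hev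
    refine ⟨r, ?_⟩
    rw [hsum, hr]; push_cast; ring
  -- x₀ not in Λ₊
  have hx₀notin : x₀ ∉ evenSumSpan X := by
    intro h
    obtain ⟨n, hn⟩ := hpar x₀ h x₀ hx₀
    rw [hnorm x₀ hx₀] at hn
    have : (2 * (m:ℤ) + 1 : ℤ) = 2 * n := by exact_mod_cast hn
    omega
  -- Λ₊ ⊆ closure X
  have hsub : ∀ v ∈ evenSumSpan X,
      v ∈ AddSubgroup.closure (X : Set (EuclideanSpace ℝ (Fin d))) := by
    rintro v ⟨c, -, rfl⟩
    refine AddSubgroup.sum_mem _ fun y _ => ?_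
    rw [Int.cast_smul_eq_zsmul]
    exact AddSubgroup.zsmul_mem _ (AddSubgroup.subset_closure y.2) _
  -- √2 • α is in the dual of Γ
  have hAdual : Real.sqrt 2 • α ∈ dualSubgroup Γ := by
    intro γ hγ
    obtain ⟨z, hz⟩ := hαdual (Real.sqrt 2 • γ) (hsub _ ((hΓmem γ).mp hγ))
    refine ⟨z, ?_⟩
    rw [real_inner_smul_right] at hz
    rw [real_inner_smul_left]; exact hz
  -- (√2/2) • x₀ is in the dual of Γ
  have hBdual : (Real.sqrt 2 / 2) • x₀ ∈ dualSubgroup Γ := by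
    intro γ hγ
    obtain ⟨n, hn⟩ := hpar (Real.sqrt 2 • γ) ((hΓmem γ).mp hγ) x₀ hx₀
    rw [real_inner_smul_left] at hn
    refine ⟨n, ?_⟩
    rw [real_inner_smul_left, real_inner_comm]
    linarith [hn]
  have hss1 : Real.sqrt 2 * (Real.sqrt 2 / 2) = 1 := by
    rw [mul_div_assoc', hs2]; norm_num
  -- (√2/2) • x₀ is not in Γ
  have hBnot : (Real.sqrt 2 / 2) • x₀ ∉ Γ := by
    intro h
    have h1 := (hΓmem _).mp h
    rw [smul_smul, hss1, one_smul] at h1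
    exact hx₀notin h1
  by_cases hA : Real.sqrt 2 • α ∈ Γ
  · -- then 2 • α ∈ Λ₊, so ⟪α, α⟫ is an integer; moment conditions give a contradiction
    have h2α : (2:ℝ) • α ∈ evenSumSpan X := by
      have h1 := (hΓmem _).mp hA
      rw [smul_smul, hs2] at h1
      exact h1
    obtain ⟨z, hz⟩ := ha _ h2α
    have hzz : ⟪(2:ℝ) • α, (2:ℝ) • α⟫ = 4 * ⟪α, α⟫ := by
      rw [real_inner_smul_left, real_inner_smul_right]; ring
    rw [hzz] at hz
    have hN : ⟪α, α⟫ = (z : ℝ) := by linarith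
    -- moment computation
    have hDsub : X ⊆ D := by rw [hD]; exact Finset.subset_union_left
    have hDcard : (0:ℝ) < D.card := by
      exact_mod_cast Finset.card_pos.mpr ⟨x₀, hDsub hx₀⟩
    have htri : ∀ x ∈ D, ⟪α, x⟫ = 0 ∨ ⟪α, x⟫ = 1 ∨ ⟪α, x⟫ = -1 := by
      intro x hx
      rw [hD, Finset.mem_union] at hx
      rcases hx with hx | hx
      · exact hαX x hx
      · obtain ⟨y, hy, rfl⟩ := Finset.mem_image.mp hx
        rw [inner_neg_right]
        rcases hαX y hy with h | h | h <;> rw [h] <;> norm_num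
    have hsum_eq : ∑ x ∈ D, ⟪α, x⟫ ^ 4 = ∑ x ∈ D, ⟪α, x⟫ ^ 2 :=
      Finset.sum_congr rfl fun x hx => by
        rcases htri x hx with h | h | h <;> rw [h] <;> norm_num
    have e2 := h2mom α
    have e4 := h4mom α
    rw [hsum_eq, e2] at e4
    have hNne : ⟪α, α⟫ ≠ 0 := fun h => hα0 (inner_self_eq_zero.mp h)
    have h9 : 9 ≤ (2 * m + 1) ^ 2 := by nlinarith
    have hd2 : d + 2 = (2 * m + 1) ^ 2 := by omega
    have hdR : (d : ℝ) + 2 = (2 * (m:ℝ) + 1) ^ 2 := by exact_mod_cast hd2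
    have hdpos : (0:ℝ) < d := by
      have h7 : 7 ≤ d := by omega
      have : (7:ℝ) ≤ d := by exact_mod_cast h7
      linarith
    have hkpos : (0:ℝ) < 2 * (m:ℝ) + 1 := by positivity
    set N : ℝ := ⟪α, α⟫ with hNdef
    have hkey : 3 * N = 2 * (m:ℝ) + 1 := by
      have hCne : (D.card : ℝ) ≠ 0 := ne_of_gt hDcard
      have hdne : (d : ℝ) ≠ 0 := ne_of_gt hdpos
      have hd2ne : (d : ℝ) + 2 ≠ 0 := by positivity
      have hdR' : (d : ℝ) = (2 * (m:ℝ) + 1) ^ 2 - 2 := by linarith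
      rw [hdR'] at e4
      have hk2ne : (2 * (m:ℝ) + 1) ^ 2 - 2 ≠ 0 := by rw [← hdR']; exact hdne
      have hkne : (2 * (m:ℝ) + 1) ≠ 0 := ne_of_gt hkpos
      field_simp at e4
      have hfac : ((2 * (m:ℝ) + 1) ^ 2 * ((2 * (m:ℝ) + 1) ^ 2 - 2) * (D.card : ℝ) * N)
          * ((2 * (m:ℝ) + 1) - 3 * N) = 0 := by linear_combination ((2 * (m:ℝ) + 1) * ((2 * (m:ℝ) + 1) ^ 2 - 2) * (D.card : ℝ) * N) * e4
      rcases mul_eq_zero.mp hfac with h | h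
      · exfalso
        have : ((2 * (m:ℝ) + 1) ^ 2 * ((2 * (m:ℝ) + 1) ^ 2 - 2) * (D.card : ℝ)) * N ≠ 0 := by
          refine mul_ne_zero (mul_ne_zero (mul_ne_zero (pow_ne_zero _ hkne) hk2ne) hCne) hNne
        exact this h
      · linarith
    rw [hN] at hkey
    have h3z : (3 * z : ℤ) = 2 * (m : ℤ) + 1 := by exact_mod_cast hkey
    omega
  · -- both classes are nonzero in Γ*/Γ, which has order 2; hence equal
    have hQA : (QuotientAddGroup.mk (⟨Real.sqrt 2 • α, hAdual⟩ : dualSubgroup Γ) :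
        _ ⧸ Γ.addSubgroupOf (dualSubgroup Γ)) ≠ 0 := fun h =>
      hA (AddSubgroup.mem_addSubgroupOf.mp ((QuotientAddGroup.eq_zero_iff _).mp h))
    have hQB : (QuotientAddGroup.mk (⟨(Real.sqrt 2 / 2) • x₀, hBdual⟩ : dualSubgroup Γ) :
        _ ⧸ Γ.addSubgroupOf (dualSubgroup Γ)) ≠ 0 := fun h =>
      hBnot (AddSubgroup.mem_addSubgroupOf.mp ((QuotientAddGroup.eq_zero_iff _).mp h))
    have heq := card_two_nonzero_eq hb hQA hQB
    have heq0 := AddSubgroup.mem_addSubgroupOf.mp (QuotientAddGroup.eq.mp heq)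
    have heq' : -(Real.sqrt 2 • α) + (Real.sqrt 2 / 2) • x₀ ∈ Γ := heq0
    have hmem := (hΓmem _).mp heq'
    rw [smul_add, smul_neg, smul_smul, smul_smul, hs2, hss1, one_smul] at hmem
    obtain ⟨n, hn⟩ := hpar _ hmem x₀ hx₀
    rw [inner_add_left, inner_neg_left, real_inner_smul_left, hnorm x₀ hx₀] at hn
    have hnZ : ∃ t : ℤ, (t = 0 ∨ t = 1 ∨ t = -1) ∧ ⟪α, x₀⟫ = (t : ℝ) := by
      rcases hαX x₀ hx₀ with h | h | h
      exacts [⟨0, by norm_num, by simpa using h⟩, ⟨1, by norm_num, by simpa using h⟩,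
        ⟨-1, by norm_num, by simpa using h⟩]
    obtain ⟨t, ht, hαx₀⟩ := hnZ
    rw [hαx₀] at hn
    have hfin : (-(2 * t) + (2 * (m:ℤ) + 1) : ℤ) = 2 * n := by exact_mod_cast hn
    omega
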